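/- Let G be a group with finite generating set X, let g be an element of geodesic length n, and let Γ_n(g) be the set of geodesic words of length n representing g. Then the sum over w ∈ Γ_n(g) of the product over i = 1..n of 1/|d_-(w_i)| equals 1. -/

import Mathlib

open scoped Classical

/-- The geodesic length of `g` with respect to the generating set `X`. -/
noncomputable def glen {G : Type*} [Group G] (X : Finset G) (g : G) : ℕ :=
  sInf {n : ℕ | ∃ w : List G, (∀ x ∈ w, x ∈ X) ∧ w.prod = g ∧ w.length = n}

/-- A word over `X` is geodesic if its length is the geodesic length of the
element it represents. -/
def IsGeodesic {G : Type*} [Group G] (X : Finset G) (w : List G) : Prop :=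
  (∀ x ∈ w, x ∈ X) ∧ w.length = glen X w.prod

/-- The set of generators that shorten the element represented by `w`. -/
noncomputable def dminus {G : Type*} [Group G] (X : Finset G) (w : List G) : Finset G :=
  X.filter fun x => glen X (w.prod * x) < glen X w.prod

-- aux
section
variable {G : Type*} [Group G]

lemma glen_le (X : Finset G) {g : G} {w : List G} (h : ∀ x ∈ w, x ∈ X) (hp : w.prod = g) :
    glen X g ≤ w.length := Nat.sInf_le ⟨w, h, hp, rfl⟩

lemma glen_exists (X : Finset G) (hinv : ∀ x ∈ X, x⁻¹ ∈ X)
    (hgen : Subgroup.closure (X : Set G) = ⊤) (g : G) :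
    ∃ w : List G, (∀ x ∈ w, x ∈ X) ∧ w.prod = g ∧ w.length = glen X g := by
  have hg : g ∈ Subgroup.closure (X : Set G) := hgen ▸ Subgroup.mem_top g
  have hne : ∃ w : List G, (∀ x ∈ w, x ∈ X) ∧ w.prod = g := by
    induction hg using Subgroup.closure_induction with
    | mem x hx => exact ⟨[x], by simpa using hx, by simp⟩
    | one => exact ⟨[], by simp, by simp⟩
    | mul a b _ _ iha ihb =>
        obtain ⟨u, hu, hup⟩ := iha
        obtain ⟨v, hv, hvp⟩ := ihb
        refine ⟨u ++ v, ?_, by simp [hup, hvp]⟩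
        intro x hx
        rcases List.mem_append.1 hx with h | h
        exacts [hu x h, hv x h]
    | inv a _ iha =>
        obtain ⟨u, hu, hup⟩ := iha
        refine ⟨(u.map fun x => x⁻¹).reverse, ?_, ?_⟩
        · intro x hx
          simp only [List.mem_reverse, List.mem_map] at hx
          obtain ⟨y, hy, rfl⟩ := hx
          exact hinv y (hu y hy)
        · rw [← List.prod_inv_reverse, hup]
  obtain ⟨w, hw⟩ := hne
  have : glen X g ∈ {n : ℕ | ∃ w : List G, (∀ x ∈ w, x ∈ X) ∧ w.prod = g ∧ w.length = n} :=
    Nat.sInf_mem ⟨w.length, w, hw.1, hw.2, rfl⟩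
  obtain ⟨v, h1, h2, h3⟩ := this
  exact ⟨v, h1, h2, h3⟩

lemma finite_words (X : Finset G) (n : ℕ) (g : G) :
    {w : List G | (∀ x ∈ w, x ∈ X) ∧ w.length = n ∧ w.prod = g}.Finite := by
  have : {w : List G | (∀ x ∈ w, x ∈ X) ∧ w.length = n ∧ w.prod = g} ⊆
      Set.range (fun v : Fin n → X => List.ofFn fun i => (v i : G)) := by
    rintro w ⟨hmem, hlen, -⟩
    refine ⟨fun i => ⟨w.get (Fin.cast hlen.symm i), hmem _ (by exact List.get_mem w _)⟩, ?_⟩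
    apply List.ext_get
    · simp [hlen]
    · intro i h1 h2
      simp [List.get_ofFn]
  exact Set.Finite.subset (Set.finite_range _) this

noncomputable def wordFinset (X : Finset G) (n : ℕ) (g : G) : Finset (List G) :=
  (finite_words X n g).toFinset

lemma mem_wordFinset {X : Finset G} {n : ℕ} {g : G} {w : List G} :
    w ∈ wordFinset X n g ↔ (∀ x ∈ w, x ∈ X) ∧ w.length = n ∧ w.prod = g := by
  simp [wordFinset, Set.Finite.mem_toFinset]

end

section
variable {G : Type*} [Group G]


lemma glen_mul_le (X : Finset G) (hinv : ∀ x ∈ X, x⁻¹ ∈ X)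
    (hgen : Subgroup.closure (X : Set G) = ⊤) (h : G) {x : G} (hx : x ∈ X) :
    glen X (h * x) ≤ glen X h + 1 := by
  obtain ⟨w, hw1, hw2, hw3⟩ := glen_exists X hinv hgen h
  have := glen_le X (g := h * x) (w := w ++ [x]) ?_ (by simp [hw2])
  · simpa [hw3] using this
  · intro y hy
    rcases List.mem_append.1 hy with h' | h'
    · exact hw1 y h'
    · simpa using List.mem_singleton.1 h' ▸ hx

lemma key (X : Finset G) (hinv : ∀ x ∈ X, x⁻¹ ∈ X)
    (hgen : Subgroup.closure (X : Set G) = ⊤) :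
    ∀ n (g : G), glen X g = n →
    ∑ w ∈ wordFinset X n g,
        ∏ i ∈ Finset.range n, (1 : ℚ) / ((dminus X (w.take (i + 1))).card : ℚ) = 1 := by
  intro n
  induction n with
  | zero =>
    intro g hg
    obtain ⟨w, _, hw2, hw3⟩ := glen_exists X hinv hgen g
    rw [hg] at hw3
    have hg1 : g = 1 := by
      rw [← hw2, List.length_eq_zero_iff.1 hw3, List.prod_nil]
    have : wordFinset X 0 g = {([] : List G)} := by
      ext w
      simp only [mem_wordFinset, Finset.mem_singleton, List.length_eq_zero_iff]
      constructor
      · rintro ⟨-, h, -⟩; exact h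
      · rintro rfl; exact ⟨by simp, rfl, by simp [hg1]⟩
    simp [this]
  | succ n ih =>
    intro g hg
    set D := X.filter (fun y => glen X (g * y) < glen X g) with hD
    set T := X.filter (fun x => glen X (g * x⁻¹) < glen X g) with hT
    -- every x in T gives glen (g * x⁻¹) = n
    have hTglen : ∀ x ∈ T, glen X (g * x⁻¹) = n := by
      intro x hx
      rw [hT, Finset.mem_filter] at hx
      have h1 : glen X (g * x⁻¹) < n + 1 := hg ▸ hx.2
      have h2 : glen X ((g * x⁻¹) * x) ≤ glen X (g * x⁻¹) + 1 :=
        glen_mul_le X hinv hgen _ hx.1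
      rw [inv_mul_cancel_right, hg] at h2
      omega
    -- D is nonempty
    have hDne : D.Nonempty := by
      obtain ⟨w, hw1, hw2, hw3⟩ := glen_exists X hinv hgen g
      rw [hg] at hw3
      have hne : w ≠ [] := by intro h; simp [h] at hw3
      refine ⟨(w.getLast hne)⁻¹, ?_⟩
      rw [hD, Finset.mem_filter]
      refine ⟨hinv _ (hw1 _ (List.getLast_mem hne)), ?_⟩
      have heq : w.dropLast ++ [w.getLast hne] = w := List.dropLast_append_getLast hne
      have hprod : w.dropLast.prod = g * (w.getLast hne)⁻¹ := by
        rw [eq_mul_inv_iff_mul_eq]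
        have h := congrArg List.prod heq
        rw [List.prod_append, List.prod_singleton] at h
        exact h.trans hw2
      have : glen X (g * (w.getLast hne)⁻¹) ≤ w.dropLast.length := by
        refine glen_le X ?_ hprod
        intro y hy
        exact hw1 y (List.mem_of_mem_dropLast hy)
      rw [List.length_dropLast, hw3] at this
      omega
    have hcard : T.card = D.card := by
      refine Finset.card_bij' (fun x _ => x⁻¹) (fun y _ => y⁻¹) ?_ ?_ ?_ ?_
      · intro x hx
        rw [hT, Finset.mem_filter] at hx
        rw [hD, Finset.mem_filter]
        exact ⟨hinv _ hx.1, hx.2⟩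
      · intro y hy
        rw [hD, Finset.mem_filter] at hy
        rw [hT, Finset.mem_filter]
        exact ⟨hinv _ hy.1, by simpa using hy.2⟩
      · intro x _; simp
      · intro y _; simp
    -- split
    have hsplit : wordFinset X (n + 1) g =
        T.biUnion (fun x => (wordFinset X n (g * x⁻¹)).image (fun u => u ++ [x])) := by
      ext w
      simp only [mem_wordFinset, Finset.mem_biUnion, Finset.mem_image]
      constructor
      · rintro ⟨hw1, hw2, hw3⟩
        have hne : w ≠ [] := by intro h; simp [h] at hw2
        set x := w.getLast hne with hx
        have heq : w.dropLast ++ [x] = w := List.dropLast_append_getLast hne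
        have hxX : x ∈ X := hw1 _ (List.getLast_mem hne)
        have hprod : w.dropLast.prod = g * x⁻¹ := by
          rw [eq_mul_inv_iff_mul_eq]
          have h := congrArg List.prod heq
          rw [List.prod_append, List.prod_singleton] at h
          exact h.trans hw3
        have hglen : glen X (g * x⁻¹) ≤ n := by
          have := glen_le X (fun y hy => hw1 y (List.mem_of_mem_dropLast hy)) hprod
          rw [List.length_dropLast, hw2] at this
          omega
        refine ⟨x, ?_, w.dropLast, ?_, heq⟩
        · rw [hT, Finset.mem_filter]; exact ⟨hxX, by rw [hg]; omega⟩
        · exact ⟨fun y hy => hw1 y (List.mem_of_mem_dropLast hy),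
            by rw [List.length_dropLast, hw2]; omega, hprod⟩
      · rintro ⟨x, hx, u, hu, rfl⟩
        rw [hT, Finset.mem_filter] at hx
        obtain ⟨hu1, hu2, hu3⟩ := hu
        refine ⟨?_, by simp [hu2], by simp [hu3]⟩
        intro y hy
        rcases List.mem_append.1 hy with h' | h'
        · exact hu1 y h'
        · exact List.mem_singleton.1 h' ▸ hx.1
    have hdisj : (↑T : Set G).PairwiseDisjoint
        (fun x => (wordFinset X n (g * x⁻¹)).image (fun u => u ++ [x])) := by
      intro x _ y _ hxy
      simp only [Function.onFun]
      rw [Finset.disjoint_left]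
      rintro w hwx hwy
      obtain ⟨u, -, rfl⟩ := Finset.mem_image.1 hwx
      obtain ⟨v, -, hvy⟩ := Finset.mem_image.1 hwy
      have := congrArg List.getLast? hvy
      rw [List.getLast?_concat, List.getLast?_concat] at this
      have hxy' : y = x := by injection this
      exact hxy hxy'.symm
    rw [hsplit, Finset.sum_biUnion hdisj]
    have hinner : ∀ x ∈ T,
        (∑ w ∈ (wordFinset X n (g * x⁻¹)).image (fun u => u ++ [x]),
          ∏ i ∈ Finset.range (n + 1), (1 : ℚ) / ((dminus X (w.take (i + 1))).card : ℚ))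
        = 1 / (D.card : ℚ) := by
      intro x hx
      rw [Finset.sum_image (fun u _ v _ h => List.append_cancel_right h)]
      have hterm : ∀ u ∈ wordFinset X n (g * x⁻¹),
          (∏ i ∈ Finset.range (n + 1), (1 : ℚ) / ((dminus X ((u ++ [x]).take (i + 1))).card : ℚ))
          = (∏ i ∈ Finset.range n, (1 : ℚ) / ((dminus X (u.take (i + 1))).card : ℚ))
              * (1 / (D.card : ℚ)) := by
        intro u hu
        obtain ⟨hu1, hu2, hu3⟩ := mem_wordFinset.1 hu
        rw [Finset.prod_range_succ]
        congr 1
        · refine Finset.prod_congr rfl fun i hi => ?_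
          rw [List.take_append_of_le_length (show i + 1 ≤ u.length by rw [hu2]; exact Finset.mem_range.1 hi)]
        · congr 2
          have h1 : (u ++ [x]).take (n + 1) = u ++ [x] :=
            List.take_of_length_le (show (u ++ [x]).length ≤ n + 1 by simp [hu2])
          rw [h1, dminus, hD]
          have : (u ++ [x]).prod = g := by simp [hu3]
          rw [this]
      rw [Finset.sum_congr rfl hterm, ← Finset.sum_mul, ih (g * x⁻¹) (hTglen x hx), one_mul]
    rw [Finset.sum_congr rfl hinner, Finset.sum_const, hcard, nsmul_eq_mul, mul_one_div,
      div_self]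
    exact Nat.cast_ne_zero.2 (Finset.card_ne_zero_of_mem hDne.choose_spec)

end

/-- For an element `g` of geodesic length `n`, the sum over geodesic words `w` of
length `n` representing `g` of `∏_{i=1}^n 1/|d_-(w_i)|` equals `1`. -/
theorem sum_over_geodesics_to_element_eq_one {G : Type*} [Group G]
    (X : Finset G) (hinv : ∀ x ∈ X, x⁻¹ ∈ X)
    (hgen : Subgroup.closure (X : Set G) = ⊤) (g : G) (n : ℕ) (hg : glen X g = n) :
    ∑ᶠ w ∈ {w : List G | IsGeodesic X w ∧ w.length = n ∧ w.prod = g},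
        ∏ i ∈ Finset.range n, (1 : ℚ) / ((dminus X (w.take (i + 1))).card : ℚ) = 1 := by
  have hset : {w : List G | IsGeodesic X w ∧ w.length = n ∧ w.prod = g} =
      ↑(wordFinset X n g) := by
    ext w
    simp only [Set.mem_setOf_eq, Finset.mem_coe, mem_wordFinset]
    constructor
    · rintro ⟨⟨h1, -⟩, h2, h3⟩; exact ⟨h1, h2, h3⟩
    · rintro ⟨h1, h2, h3⟩
      exact ⟨⟨h1, by rw [h3, hg, h2]⟩, h2, h3⟩
  rw [hset, finsum_mem_coe_finset]
  exact key X hinv hgen n g hg
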